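/- Let A be an alphabet with at least three letters. Every steady word over A is bifurcate over A: for every position i from 0 to n (where n is the length of the word) there exists a letter x in A such that inserting x at position i yields a square-free word. -/

import Mathlib

/-- A word is square-free if it contains no nonempty factor of the form `X ++ X`. -/
def SquareFree {α : Type*} (W : List α) : Prop :=
  ∀ X : List α, X ≠ [] → ¬ (X ++ X) <:+: W

/-- A square-free word is steady if deleting any single letter leaves it square-free. -/
def Steady {α : Type*} (W : List α) : Prop :=
  SquareFree W ∧ ∀ i < W.length, SquareFree (W.eraseIdx i)

private lemma eraseIdx_mid {α : Type*} (l : List α) (x : α) (r : List α) :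
    (l ++ x :: r).eraseIdx l.length = l ++ r := by
  induction l with
  | nil => rfl
  | cons h t ih => simpa [List.eraseIdx] using ih

private lemma pick {α : Type*} {a b c : α} (hab : a ≠ b) (hac : a ≠ c) (hbc : b ≠ c)
    (o₁ o₂ : Option α) :
    ∃ x, (x = a ∨ x = b ∨ x = c) ∧ some x ≠ o₁ ∧ some x ≠ o₂ := by
  classical
  by_cases ha : some a ≠ o₁ ∧ some a ≠ o₂
  · exact ⟨a, Or.inl rfl, ha.1, ha.2⟩
  by_cases hb : some b ≠ o₁ ∧ some b ≠ o₂
  · exact ⟨b, Or.inr (Or.inl rfl), hb.1, hb.2⟩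
  by_cases hc : some c ≠ o₁ ∧ some c ≠ o₂
  · exact ⟨c, Or.inr (Or.inr rfl), hc.1, hc.2⟩
  exfalso
  have inj : ∀ (p q : α) (o : Option α), some p = o → some q = o → p = q := by
    intro p q o hp hq
    injection hp.trans hq.symm
  have ha' : some a = o₁ ∨ some a = o₂ := by tauto
  have hb' : some b = o₁ ∨ some b = o₂ := by tauto
  have hc' : some c = o₁ ∨ some c = o₂ := by tauto
  rcases ha' with h1 | h1 <;> rcases hb' with h2 | h2 <;> rcases hc' with h3 | h3 <;>
    first
      | exact hab (inj _ _ _ h1 h2)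
      | exact hac (inj _ _ _ h1 h3)
      | exact hbc (inj _ _ _ h2 h3)

/-- If `W = L ++ x :: M` and `L ++ M` contains a nonempty square, then `W` is not steady. -/
private lemma hit {α : Type*} {W : List α}
    (hst : ∀ i < W.length, SquareFree (W.eraseIdx i))
    {L M P T Q : List α} {x : α} (hWeq : W = L ++ x :: M)
    (hT : T ≠ []) (hLM : P ++ (T ++ T) ++ Q = L ++ M) : False := by
  have hlen : L.length < W.length := by
    subst hWeq; simp [List.length_append]
  have h := hst L.length hlen
  rw [hWeq, eraseIdx_mid] at h
  exact h T hT ⟨P, Q, hLM⟩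

/-- Over an alphabet with at least three letters, every steady word is bifurcate:
at every position some letter of the alphabet gives a square-free extension. -/
theorem stmt8 {α : Type*} (A : Set α)
    (hA : ∃ a b c, a ∈ A ∧ b ∈ A ∧ c ∈ A ∧ a ≠ b ∧ a ≠ c ∧ b ≠ c)
    (W : List α) (hW : ∀ l ∈ W, l ∈ A) (hsteady : Steady W) :
    ∀ i ≤ W.length, ∃ x ∈ A, SquareFree (W.take i ++ x :: W.drop i) := by
  obtain ⟨a, b, c, haA, hbA, hcA, hab, hac, hbc⟩ := hA
  obtain ⟨hsf, hst⟩ := hsteady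
  intro i hi
  obtain ⟨x, hxm, hx1, hx2⟩ := pick hab hac hbc ((W.take i).getLast?) ((W.drop i).head?)
  have hxA : x ∈ A := by rcases hxm with rfl | rfl | rfl <;> assumption
  refine ⟨x, hxA, ?_⟩
  set u := W.take i with hu
  set v := W.drop i with hv
  have huv : u ++ v = W := List.take_append_drop i W
  rintro X hX ⟨P, Q, hPQ⟩
  have h : u ++ x :: v = P ++ (X ++ (X ++ Q)) := by
    rw [← hPQ]; simp [List.append_assoc]
  rcases List.append_eq_append_iff.mp h with ⟨e, he1, he2⟩ | ⟨e, he1, he2⟩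
  · -- he1 : P = u ++ e, he2 : x :: v = e ++ (X ++ (X ++ Q))
    cases e with
    | cons y e' =>
      rw [List.cons_append] at he2
      obtain ⟨rfl, hv'⟩ := List.cons.inj he2
      exact hsf X hX ⟨u ++ e', Q, by rw [← huv, hv']; simp [List.append_assoc]⟩
    | nil =>
      simp only [List.nil_append] at he2
      have he1' : P = u := by simpa using he1
      cases X with
      | nil => exact hX rfl
      | cons y S =>
        rw [List.cons_append] at he2
        obtain ⟨rfl, hv'⟩ := List.cons.inj he2
        by_cases hS : S = []
        · subst hS
          apply hx2
          rw [hv']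
          simp
        · refine hit hst (L := P ++ S) (M := S ++ Q) (P := P) (T := S) (Q := Q) (x := x)
            (hWeq := ?_) (hT := hS) (hLM := ?_)
          · rw [← huv, hv', ← he1']; simp [List.append_assoc]
          · simp [List.append_assoc]
  · -- he1 : u = P ++ e, he2 : X ++ (X ++ Q) = e ++ x :: v
    rcases List.append_eq_append_iff.mp he2 with ⟨f, hf1, hf2⟩ | ⟨f, hf1, hf2⟩
    · -- hf1 : e = X ++ f, hf2 : X ++ Q = f ++ x :: v
      rcases List.append_eq_append_iff.mp hf2 with ⟨g, hg1, hg2⟩ | ⟨g, hg1, hg2⟩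
      · -- hg1 : f = X ++ g, hg2 : Q = g ++ x :: v : both copies inside u
        exact hsf X hX ⟨P, g ++ v,
          by rw [← huv, he1, hf1, hg1]; simp [List.append_assoc]⟩
      · -- hg1 : X = f ++ g, hg2 : x :: v = g ++ Q
        cases g with
        | nil =>
          simp only [List.append_nil] at hg1
          exact hsf X hX ⟨P, v,
            by rw [← huv, he1, hf1, ← hg1]; try simp [List.append_assoc]⟩
        | cons y S =>
          rw [List.cons_append] at hg2
          obtain ⟨rfl, hv'⟩ := List.cons.inj hg2
          -- X = f ++ x :: S : second copy contains the inserted letter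
          by_cases hFS : f ++ S = []
          · obtain ⟨hf0, hS0⟩ := List.append_eq_nil_iff.mp hFS
            subst hf0; subst hS0
            have hux : u = P ++ [x] := by rw [he1, hf1, hg1]; simp
            apply hx1
            rw [hux]
            exact List.getLast?_concat.symm
          · refine hit hst (L := P ++ f) (M := S ++ (f ++ (S ++ Q)))
              (P := P) (T := f ++ S) (Q := Q) (x := x)
              (hWeq := ?_) (hT := hFS) (hLM := ?_)
            · rw [← huv, he1, hf1, hg1, hv']; simp [List.append_assoc]
            · simp [List.append_assoc]
    · -- hf1 : X = e ++ f, hf2 : x :: v = f ++ (X ++ Q)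
      cases f with
      | nil =>
        simp only [List.append_nil] at hf1
        simp only [List.nil_append] at hf2
        cases X with
        | nil => exact hX rfl
        | cons y S =>
          rw [List.cons_append] at hf2
          obtain ⟨rfl, hv'⟩ := List.cons.inj hf2
          by_cases hS : S = []
          · subst hS
            have hux : u = P ++ [x] := by rw [he1, ← hf1]
            apply hx1
            rw [hux]
            exact List.getLast?_concat.symm
          · refine hit hst (L := P) (M := S ++ (S ++ Q)) (P := P) (T := S) (Q := Q)
              (x := x) (hWeq := ?_) (hT := hS) (hLM := ?_)
            · rw [← huv, he1, ← hf1, hv']; simp [List.append_assoc]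
            · simp [List.append_assoc]
      | cons y S =>
        rw [List.cons_append] at hf2
        obtain ⟨rfl, hv'⟩ := List.cons.inj hf2
        -- X = e ++ x :: S : first copy contains the inserted letter
        by_cases hES : e ++ S = []
        · obtain ⟨he0, hS0⟩ := List.append_eq_nil_iff.mp hES
          subst he0; subst hS0
          apply hx2
          rw [hv', hf1]
          simp
        · refine hit hst (L := P ++ (e ++ (S ++ e))) (M := S ++ Q)
            (P := P) (T := e ++ S) (Q := Q) (x := x)
            (hWeq := ?_) (hT := hES) (hLM := ?_)
          · rw [← huv, he1, hv', hf1]; simp [List.append_assoc]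
          · simp [List.append_assoc]
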